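/- Let α = (α₁,…,α_d) and β = (β₁,…,β_d) be tuples of nonnegative real numbers, let ᾱ be the decreasing rearrangement of α and β̄ the increasing rearrangement of β. Then ∏_{i=1}^d (α_i + β_i) ≤ ∏_{i=1}^d (ᾱ_i + β̄_i). -/
import Mathlib

open Finset Equiv

private lemma key : ∀ (d : ℕ) (a b : Fin d → ℝ), (∀ i, 0 ≤ a i) → (∀ i, 0 ≤ b i) →
    Antitone a → Monotone b → ∀ ρ : Equiv.Perm (Fin d),
    ∏ i, (a i + b (ρ i)) ≤ ∏ i, (a i + b i) := by
  intro d
  induction d with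
  | zero => intro a b _ _ _ _ ρ; simp
  | succ n ih =>
    intro a b ha hb hadec hbinc ρ
    have hnn : ∀ (ρ' : Equiv.Perm (Fin (n+1))) i, 0 ≤ a i + b (ρ' i) :=
      fun ρ' i => add_nonneg (ha i) (hb _)
    have main0 : ∀ ρ' : Equiv.Perm (Fin (n+1)), ρ' 0 = 0 →
        ∏ i, (a i + b (ρ' i)) ≤ ∏ i, (a i + b i) := by
      intro ρ' h0
      have hd : Equiv.Perm.decomposeFin.symm (Equiv.Perm.decomposeFin ρ') = ρ' :=
        Equiv.symm_apply_apply _ _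
      set p := (Equiv.Perm.decomposeFin ρ').1 with hp
      set e := (Equiv.Perm.decomposeFin ρ').2 with he
      have hd2 : Equiv.Perm.decomposeFin.symm (p, e) = ρ' := by
        rw [hp, he]; exact hd
      have hp0 : p = 0 := by
        rw [← h0, ← hd2]; simp
      have hsucc : ∀ i : Fin n, ρ' i.succ = (e i).succ := by
        intro i
        rw [← hd2, Equiv.Perm.decomposeFin_symm_apply_succ, hp0]
        simp
      rw [Fin.prod_univ_succ, Fin.prod_univ_succ, h0]
      have : ∏ i : Fin n, (a i.succ + b (ρ' i.succ))
          = ∏ i : Fin n, (a i.succ + b (e i).succ) := by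
        exact Finset.prod_congr rfl fun i _ => by rw [hsucc]
      rw [this]
      have hle := ih (fun i => a i.succ) (fun i => b i.succ)
        (fun i => ha _) (fun i => hb _)
        (fun i j hij => hadec (Fin.succ_le_succ_iff.mpr hij))
        (fun i j hij => hbinc (Fin.succ_le_succ_iff.mpr hij)) e
      exact mul_le_mul_of_nonneg_left hle (add_nonneg (ha 0) (hb 0))
    by_cases hj : ρ.symm 0 = 0
    · exact main0 ρ (by simpa using congrArg ρ hj |>.symm ▸ (ρ.apply_symm_apply 0))
    · set j := ρ.symm 0 with hjdef
      have hρj : ρ j = 0 := ρ.apply_symm_apply 0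
      set ρ'' := ρ * Equiv.swap 0 j with hρ''
      have h0'' : ρ'' 0 = 0 := by
        simp [hρ'', Equiv.Perm.mul_apply, Equiv.swap_apply_left, hρj]
      have step : ∏ i, (a i + b (ρ i)) ≤ ∏ i, (a i + b (ρ'' i)) := by
        set f : Fin (n+1) → ℝ := fun i => a i + b (ρ i) with hf
        set g : Fin (n+1) → ℝ := fun i => a i + b (ρ'' i) with hg
        have hjmem : j ∈ (univ : Finset (Fin (n+1))) := mem_univ _
        have h0mem : (0 : Fin (n+1)) ∈ univ.erase j :=
          Finset.mem_erase.mpr ⟨fun h => hj (by simpa using h.symm), mem_univ _⟩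
        have split : ∀ h : Fin (n+1) → ℝ, ∏ i, h i
            = h j * (h 0 * ∏ i ∈ (univ.erase j).erase 0, h i) := by
          intro h
          rw [← Finset.mul_prod_erase univ h hjmem, ← Finset.mul_prod_erase _ h h0mem]
        rw [split f, split g]
        have hrest : ∏ i ∈ (univ.erase j).erase 0, f i
            = ∏ i ∈ (univ.erase j).erase 0, g i := by
          refine Finset.prod_congr rfl fun i hi => ?_
          have h1 := Finset.mem_erase.mp hi
          have hi0 := h1.1
          have hij := (Finset.mem_erase.mp h1.2).1
          simp [hf, hg, hρ'', Equiv.Perm.mul_apply, Equiv.swap_apply_of_ne_of_ne hi0 hij]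
        rw [hrest]
        have hRnn : 0 ≤ ∏ i ∈ (univ.erase j).erase 0, g i :=
          Finset.prod_nonneg fun i _ => hnn ρ'' i
        have hf0 : f 0 = a 0 + b (ρ 0) := rfl
        have hfj : f j = a j + b 0 := by rw [hf]; simp [hρj]
        have hg0 : g 0 = a 0 + b 0 := by rw [hg]; simp [h0'']
        have hgj : g j = a j + b (ρ 0) := by
          rw [hg]
          simp [hρ'', Equiv.Perm.mul_apply, Equiv.swap_apply_right]
        have haj : a j ≤ a 0 := hadec (Fin.zero_le j)
        have hbρ : b 0 ≤ b (ρ 0) := hbinc (Fin.zero_le (ρ 0))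
        have hkey : f j * f 0 ≤ g j * g 0 := by
          rw [hf0, hfj, hg0, hgj]; nlinarith [ha j, hb 0]
        calc f j * (f 0 * ∏ i ∈ (univ.erase j).erase 0, g i)
            = (f j * f 0) * ∏ i ∈ (univ.erase j).erase 0, g i := by ring
          _ ≤ (g j * g 0) * ∏ i ∈ (univ.erase j).erase 0, g i :=
              mul_le_mul_of_nonneg_right hkey hRnn
          _ = g j * (g 0 * ∏ i ∈ (univ.erase j).erase 0, g i) := by ring
      exact step.trans (main0 ρ'' h0'')

theorem stmt_5 (d : ℕ) (α β αbar βbar : Fin d → ℝ)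
    (hα : ∀ i, 0 ≤ α i) (hβ : ∀ i, 0 ≤ β i)
    (hαperm : ∃ σ : Equiv.Perm (Fin d), αbar = α ∘ σ) (hαdec : Antitone αbar)
    (hβperm : ∃ τ : Equiv.Perm (Fin d), βbar = β ∘ τ) (hβinc : Monotone βbar) :
    ∏ i, (α i + β i) ≤ ∏ i, (αbar i + βbar i) := by
  obtain ⟨σ, hσ⟩ := hαperm
  obtain ⟨τ, hτ⟩ := hβperm
  have hαbar : ∀ i, αbar i = α (σ i) := fun i => congrFun hσ i
  have hβbar : ∀ i, βbar i = β (τ i) := fun i => congrFun hτ i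
  have h1 : ∏ i, (α i + β i) = ∏ i, (αbar i + βbar ((σ.trans τ.symm) i)) := by
    rw [← Equiv.prod_comp σ (fun i => α i + β i)]
    refine Finset.prod_congr rfl fun i _ => ?_
    rw [hαbar, hβbar]
    simp
  rw [h1]
  exact key d αbar βbar (fun i => hαbar i ▸ hα _) (fun i => hβbar i ▸ hβ _)
    hαdec hβinc (σ.trans τ.symm)
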